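/- arXiv:1410.5161 — 2 statements merged into one kernel-verified Lean document; each statement's English description precedes it below -/
import Mathlib

section
/- Let (H, α) be a monoidal Hom-bialgebra with Drinfeld twist σ. Then the Hom-bialgebra Hᵠ (with product m and coproduct Δᵠ(x) = (σΔ(x))ϱ) equals the Hom-bialgebra ((ₐH)ᵠ)ᵅ obtained by first untwisting H to the ordinary bialgebra ₐH = (H, α⁻¹∘m, Δ∘α), then twisting its coproduct by σ in the classical sense, then re-twisting by α via product α∘(α⁻¹∘m) and coproduct ((σ *Δ_{ₐH})* ϱ)∘α. In particular their coproducts coincide: Δ_{((ₐH)ᵠ)ᵅ}(x) = (σΔ(x))ϱ for all x ∈ H. -/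
open TensorProduct

noncomputable section
namespace HomTwist

variable {k : Type*} [CommRing k]

section Defs
variable {H₁ H₂ A B : Type*} [AddCommGroup H₁] [Module k H₁] [AddCommGroup H₂] [Module k H₂]
  [AddCommGroup A] [Module k A] [AddCommGroup B] [Module k B]

/-- The componentwise "action" of `H₁ ⊗ H₂` on `A ⊗ B` induced by bilinear actions
`f : H₁ → A → A` and `g : H₂ → B → B`:  `(h₁ ⊗ h₂) • (a ⊗ b) = (f h₁ a) ⊗ (g h₂ b)`. -/
def pairMap (f : H₁ →ₗ[k] A →ₗ[k] A) (g : H₂ →ₗ[k] B →ₗ[k] B) :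
    (H₁ ⊗[k] H₂) →ₗ[k] (A ⊗[k] B) →ₗ[k] A ⊗[k] B :=
  TensorProduct.lift (((TensorProduct.mapBilinear (RingHom.id k) A B A B).comp f).compl₂ g)

end Defs

section Structures
variable {H : Type*} [AddCommGroup H] [Module k H]

/-- Componentwise product on `H ⊗ H` induced by a bilinear multiplication on `H`. -/
def mulT (mul : H →ₗ[k] H →ₗ[k] H) : (H ⊗[k] H) →ₗ[k] (H ⊗[k] H) →ₗ[k] H ⊗[k] H :=
  pairMap mul mul

/-- Componentwise product on `H ⊗ (H ⊗ H)`. -/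
def mulT3 (mul : H →ₗ[k] H →ₗ[k] H) :
    (H ⊗[k] (H ⊗[k] H)) →ₗ[k] (H ⊗[k] (H ⊗[k] H)) →ₗ[k] H ⊗[k] (H ⊗[k] H) :=
  pairMap mul (mulT mul)

/-- `(r ⊗ R) ↦ r⁽¹⁾ ⊗ (R⁽¹⁾ ⊗ r⁽²⁾R⁽²⁾)`. -/
def hexA (mul : H →ₗ[k] H →ₗ[k] H) :
    ((H ⊗[k] H) ⊗[k] (H ⊗[k] H)) →ₗ[k] H ⊗[k] (H ⊗[k] H) :=
  (TensorProduct.assoc k H H H).toLinearMap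
    ∘ₗ TensorProduct.map LinearMap.id (TensorProduct.lift mul)
    ∘ₗ (TensorProduct.tensorTensorTensorComm k H H H H).toLinearMap

/-- `(r ⊗ R) ↦ r⁽¹⁾R⁽¹⁾ ⊗ (R⁽²⁾ ⊗ r⁽²⁾)`. -/
def hexB (mul : H →ₗ[k] H →ₗ[k] H) :
    ((H ⊗[k] H) ⊗[k] (H ⊗[k] H)) →ₗ[k] H ⊗[k] (H ⊗[k] H) :=
  TensorProduct.map (TensorProduct.lift mul) (TensorProduct.comm k H H).toLinearMap
    ∘ₗ (TensorProduct.tensorTensorTensorComm k H H H H).toLinearMap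

/-- Axioms of a monoidal Hom-bialgebra (Caenepeel–Goyvaerts). -/
structure IsMonHomBialgebra (mul : H →ₗ[k] H →ₗ[k] H) (one : H) (alpha : H ≃ₗ[k] H)
    (comul : H →ₗ[k] H ⊗[k] H) (counit : H →ₗ[k] k) : Prop where
  alpha_mul : ∀ a b, alpha (mul a b) = mul (alpha a) (alpha b)
  hom_assoc : ∀ a b c, mul (alpha a) (mul b c) = mul (mul a b) (alpha c)
  alpha_one : alpha one = one
  one_mul' : ∀ a, mul one a = alpha a
  mul_one' : ∀ a, mul a one = alpha a
  comul_alpha : ∀ c, comul (alpha c)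
      = TensorProduct.map alpha.toLinearMap alpha.toLinearMap (comul c)
  hom_coassoc : ∀ c,
      TensorProduct.map alpha.symm.toLinearMap comul (comul c)
        = TensorProduct.assoc k H H H
            (TensorProduct.map comul alpha.symm.toLinearMap (comul c))
  counit_alpha : ∀ c, counit (alpha c) = counit c
  counit_id : ∀ c, TensorProduct.lid k H
      (TensorProduct.map counit LinearMap.id (comul c)) = alpha.symm c
  id_counit : ∀ c, TensorProduct.rid k H
      (TensorProduct.map LinearMap.id counit (comul c)) = alpha.symm c
  comul_mul : ∀ a b, comul (mul a b) = mulT mul (comul a) (comul b)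
  comul_one : comul one = one ⊗ₜ[k] one
  counit_mul : ∀ a b, counit (mul a b) = counit a * counit b
  counit_one : counit one = 1

/-- Axioms of a (Makhlouf–Silvestrov) Hom-bialgebra (with bijective structure map). -/
structure IsHomBialgebra (mul : H →ₗ[k] H →ₗ[k] H) (one : H) (alpha : H ≃ₗ[k] H)
    (comul : H →ₗ[k] H ⊗[k] H) (counit : H →ₗ[k] k) : Prop where
  alpha_mul : ∀ a b, alpha (mul a b) = mul (alpha a) (alpha b)
  hom_assoc : ∀ a b c, mul (alpha a) (mul b c) = mul (mul a b) (alpha c)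
  alpha_one : alpha one = one
  one_mul' : ∀ a, mul one a = alpha a
  mul_one' : ∀ a, mul a one = alpha a
  comul_alpha : ∀ c, comul (alpha c)
      = TensorProduct.map alpha.toLinearMap alpha.toLinearMap (comul c)
  hom_coassoc : ∀ c,
      TensorProduct.map alpha.toLinearMap comul (comul c)
        = TensorProduct.assoc k H H H
            (TensorProduct.map comul alpha.toLinearMap (comul c))
  counit_alpha : ∀ c, counit (alpha c) = counit c
  counit_id : ∀ c, TensorProduct.lid k H
      (TensorProduct.map counit LinearMap.id (comul c)) = alpha c
  id_counit : ∀ c, TensorProduct.rid k H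
      (TensorProduct.map LinearMap.id counit (comul c)) = alpha c
  comul_mul : ∀ a b, comul (mul a b) = mulT mul (comul a) (comul b)
  comul_one : comul one = one ⊗ₜ[k] one
  counit_mul : ∀ a b, counit (mul a b) = counit a * counit b
  counit_one : counit one = 1

/-- Axioms of an ordinary (possibly noncommutative) bialgebra, given by raw data. -/
structure IsBialgebra (mul : H →ₗ[k] H →ₗ[k] H) (one : H)
    (comul : H →ₗ[k] H ⊗[k] H) (counit : H →ₗ[k] k) : Prop where
  assoc : ∀ a b c, mul (mul a b) c = mul a (mul b c)
  one_mul' : ∀ a, mul one a = a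
  mul_one' : ∀ a, mul a one = a
  coassoc : ∀ c, TensorProduct.map LinearMap.id comul (comul c)
      = TensorProduct.assoc k H H H (TensorProduct.map comul LinearMap.id (comul c))
  counit_id : ∀ c, TensorProduct.lid k H
      (TensorProduct.map counit LinearMap.id (comul c)) = c
  id_counit : ∀ c, TensorProduct.rid k H
      (TensorProduct.map LinearMap.id counit (comul c)) = c
  comul_mul : ∀ a b, comul (mul a b) = mulT mul (comul a) (comul b)
  comul_one : comul one = one ⊗ₜ[k] one
  counit_mul : ∀ a b, counit (mul a b) = counit a * counit b
  counit_one : counit one = 1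

/-- A Drinfeld twist `σ` (with inverse `ϱ`) for a monoidal Hom-bialgebra. -/
structure IsTwist (mul : H →ₗ[k] H →ₗ[k] H) (one : H) (alpha : H ≃ₗ[k] H)
    (comul : H →ₗ[k] H ⊗[k] H) (counit : H →ₗ[k] k) (σ ϱ : H ⊗[k] H) : Prop where
  mul_inv : mulT mul σ ϱ = one ⊗ₜ[k] one
  inv_mul : mulT mul ϱ σ = one ⊗ₜ[k] one
  T1 : TensorProduct.map alpha.toLinearMap alpha.toLinearMap σ = σ
  T2l : TensorProduct.lid k H (TensorProduct.map counit LinearMap.id σ) = one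
  T2r : TensorProduct.rid k H (TensorProduct.map LinearMap.id counit σ) = one
  T3 : TensorProduct.map LinearMap.id (mulT mul σ)
        (TensorProduct.map LinearMap.id comul σ)
      = TensorProduct.assoc k H H H
          (TensorProduct.map (mulT mul σ) LinearMap.id
            (TensorProduct.map comul LinearMap.id σ))

/-- The `R`-matrix axioms (Q1)–(Q4) for a monoidal Hom-bialgebra. -/
structure IsRMatrix (mul : H →ₗ[k] H →ₗ[k] H) (alpha : H ≃ₗ[k] H)
    (comul : H →ₗ[k] H ⊗[k] H) (R : H ⊗[k] H) : Prop where
  Q1 : TensorProduct.map alpha.toLinearMap alpha.toLinearMap R = R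
  Q2 : ∀ h, mulT mul R (comul h)
      = mulT mul (TensorProduct.comm k H H (comul h)) R
  Q3 : TensorProduct.assoc k H H H (TensorProduct.map comul LinearMap.id R)
      = hexA mul (R ⊗ₜ[k] R)
  Q4 : TensorProduct.map LinearMap.id comul R = hexB mul (R ⊗ₜ[k] R)

/-- Axioms of a monoidal Hom-algebra. -/
structure IsMonHomAlgebra {A : Type*} [AddCommGroup A] [Module k A]
    (mul : A →ₗ[k] A →ₗ[k] A) (one : A) (alpha : A ≃ₗ[k] A) : Prop where
  alpha_mul : ∀ a b, alpha (mul a b) = mul (alpha a) (alpha b)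
  hom_assoc : ∀ a b c, mul (alpha a) (mul b c) = mul (mul a b) (alpha c)
  alpha_one : alpha one = one
  one_mul' : ∀ a, mul one a = alpha a
  mul_one' : ∀ a, mul a one = alpha a

/-- Axioms of a monoidal Hom-coalgebra. -/
structure IsMonHomCoalgebra {C : Type*} [AddCommGroup C] [Module k C]
    (comul : C →ₗ[k] C ⊗[k] C) (counit : C →ₗ[k] k) (alpha : C ≃ₗ[k] C) : Prop where
  comul_alpha : ∀ c, comul (alpha c)
      = TensorProduct.map alpha.toLinearMap alpha.toLinearMap (comul c)
  hom_coassoc : ∀ c,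
      TensorProduct.map alpha.symm.toLinearMap comul (comul c)
        = TensorProduct.assoc k C C C
            (TensorProduct.map comul alpha.symm.toLinearMap (comul c))
  counit_alpha : ∀ c, counit (alpha c) = counit c
  counit_id : ∀ c, TensorProduct.lid k C
      (TensorProduct.map counit LinearMap.id (comul c)) = alpha.symm c
  id_counit : ∀ c, TensorProduct.rid k C
      (TensorProduct.map LinearMap.id counit (comul c)) = alpha.symm c

/-- Axioms of a left `H`-Hom-module. -/
structure IsHomModule {M : Type*} [AddCommGroup M] [Module k M]
    (mul : H →ₗ[k] H →ₗ[k] H) (one : H) (alpha : H ≃ₗ[k] H)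
    (alM : M ≃ₗ[k] M) (act : H →ₗ[k] M →ₗ[k] M) : Prop where
  compat : ∀ h m, alM (act h m) = act (alpha h) (alM m)
  hom_smul : ∀ h h' m, act (alpha h) (act h' m) = act (mul h h') (alM m)
  one_smul' : ∀ m, act one m = alM m

/-- The twisted coproduct `Δᵠ(x) = (σ Δ(x)) ϱ`. -/
def twistComul (mul : H →ₗ[k] H →ₗ[k] H) (comul : H →ₗ[k] H ⊗[k] H)
    (σ ϱ : H ⊗[k] H) : H →ₗ[k] H ⊗[k] H :=
  ((mulT mul).flip ϱ) ∘ₗ (mulT mul σ) ∘ₗ comul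

end Structures
end HomTwist
end

namespace HomTwist
open TensorProduct

/-- (Theorem 4.7, first part) `Hᵠ = ((ₐH)ᵠ)ᵅ` as Hom-bialgebras:
the product of `((ₐH)ᵠ)ᵅ` is the original product `m`, and its coproduct
`x ↦ (σ *' Δ_{ₐH}(α(α x))) *' ϱ` (with `x *' y = α⁻¹(xy)` the product of `ₐH`)
coincides with `Δᵠ(x) = (σΔ(x))ϱ`. -/
theorem twisted_equals_untwist_twist_retwist
    {k H : Type*} [CommRing k] [AddCommGroup H] [Module k H]
    (mul : H →ₗ[k] H →ₗ[k] H) (one : H) (alpha : H ≃ₗ[k] H)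
    (comul : H →ₗ[k] H ⊗[k] H) (counit : H →ₗ[k] k) (σ ϱ : H ⊗[k] H)
    (hH : IsMonHomBialgebra mul one alpha comul counit)
    (hσ : IsTwist mul one alpha comul counit σ ϱ) :
    -- products agree: `α ∘ m_{ₐH} = m`
    (∀ x y, alpha ((mul.compr₂ alpha.symm.toLinearMap) x y) = mul x y)
    -- coproducts agree: `Δ_{((ₐH)ᵠ)ᵅ} = Δᵠ`
    ∧ (∀ x, mulT (mul.compr₂ alpha.symm.toLinearMap)
          (mulT (mul.compr₂ alpha.symm.toLinearMap) σ (comul (alpha (alpha x)))) ϱ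
        = twistComul mul comul σ ϱ x) := by
  classical
  set E : H ⊗[k] H ≃ₗ[k] H ⊗[k] H := TensorProduct.congr alpha alpha with hEdef
  have hEt : ∀ a b : H, E (a ⊗ₜ[k] b) = alpha a ⊗ₜ[k] alpha b := by
    intro a b; simp [hEdef]
  have hEmap : E.toLinearMap = TensorProduct.map alpha.toLinearMap alpha.toLinearMap := by
    ext a b; simp [hEdef]
  have hpm : ∀ a b c d : H, mulT (k := k) mul (a ⊗ₜ[k] b) (c ⊗ₜ[k] d)
      = mul a c ⊗ₜ[k] mul b d := by
    intro a b c d; simp [mulT, pairMap]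
  -- L1 : multiplicativity of E
  have L1 : ∀ x y : H ⊗[k] H, mulT mul (E x) (E y) = E (mulT mul x y) := by
    intro x y
    induction x using TensorProduct.induction_on with
    | zero => simp
    | tmul a b =>
      induction y using TensorProduct.induction_on with
      | zero => simp
      | tmul c d => simp [hEt, hpm, hH.alpha_mul]
      | add u v hu hv => simp only [map_add, hu, hv]
    | add u v hu hv => simp only [map_add, LinearMap.add_apply, hu, hv]
  -- L2 : unit laws
  have L2l : ∀ y : H ⊗[k] H, mulT mul (one ⊗ₜ[k] one) y = E y := by
    intro y
    induction y using TensorProduct.induction_on with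
    | zero => simp
    | tmul c d => simp [hpm, hEt, hH.one_mul']
    | add u v hu hv => simp only [map_add, hu, hv]
  have L2r : ∀ y : H ⊗[k] H, mulT mul y (one ⊗ₜ[k] one) = E y := by
    intro y
    induction y using TensorProduct.induction_on with
    | zero => simp
    | tmul c d => simp [hpm, hEt, hH.mul_one']
    | add u v hu hv => simp only [map_add, LinearMap.add_apply, hu, hv]
  -- L3 : Hom-associativity on tensors
  have L3 : ∀ x y z : H ⊗[k] H,
      mulT mul (E x) (mulT mul y z) = mulT mul (mulT mul x y) (E z) := by
    intro x y z
    induction x using TensorProduct.induction_on with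
    | zero => simp
    | tmul a b =>
      induction y using TensorProduct.induction_on with
      | zero => simp
      | tmul c d =>
        induction z using TensorProduct.induction_on with
        | zero => simp
        | tmul e f => simp [hEt, hpm, hH.hom_assoc]
        | add u v hu hv => simp only [map_add, hu, hv]
      | add u v hu hv => simp only [map_add, LinearMap.add_apply, hu, hv]
    | add u v hu hv => simp only [map_add, LinearMap.add_apply, hu, hv]
  -- E fixes sigma
  have hEσ : E σ = σ := by
    have : E σ = TensorProduct.map alpha.toLinearMap alpha.toLinearMap σ := by
      rw [← hEmap]; rfl
    rw [this]; exact hσ.T1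
  -- E fixes rho
  have hone : E (one ⊗ₜ[k] one) = one ⊗ₜ[k] one := by simp [hEt, hH.alpha_one]
  have hrightinv : mulT mul σ (E ϱ) = one ⊗ₜ[k] one := by
    have := congrArg E hσ.mul_inv
    rw [← L1, hEσ] at this
    rw [this, hone]
  have hEϱ : E ϱ = ϱ := by
    have h3 := L3 ϱ σ (E ϱ)
    rw [hσ.inv_mul, hrightinv, L2l, L2r] at h3
    -- h3 : E (E (E ϱ)) = E (E ϱ)
    exact (E.injective (E.injective h3)).symm
  -- product of aH twisted tensors
  have hpm' : ∀ x y : H ⊗[k] H,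
      mulT (mul.compr₂ alpha.symm.toLinearMap) x y = E.symm (mulT mul x y) := by
    intro x y
    induction x using TensorProduct.induction_on with
    | zero => simp
    | tmul a b =>
      induction y using TensorProduct.induction_on with
      | zero => simp
      | tmul c d =>
        simp only [hpm]
        have : mulT (k := k) (mul.compr₂ alpha.symm.toLinearMap) (a ⊗ₜ[k] b) (c ⊗ₜ[k] d)
            = alpha.symm (mul a c) ⊗ₜ[k] alpha.symm (mul b d) := by
          simp [mulT, pairMap]
        rw [this]
        have : E.symm (mul a c ⊗ₜ[k] mul b d)
            = alpha.symm (mul a c) ⊗ₜ[k] alpha.symm (mul b d) := by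
          apply E.injective; simp [hEt]
        rw [this]
      | add u v hu hv => simp only [map_add, hu, hv]
    | add u v hu hv => simp only [map_add, LinearMap.add_apply, hu, hv]
  refine ⟨?_, ?_⟩
  · intro x y; simp [LinearMap.compr₂_apply]
  · intro x
    have hΔ : comul (alpha (alpha x)) = E (E (comul x)) := by
      rw [hH.comul_alpha, hH.comul_alpha, ← hEmap]
      rfl
    rw [hΔ, hpm', hpm']
    have inner : E.symm (mulT mul σ (E (E (comul x)))) = E (mulT mul σ (comul x)) := by
      apply E.injective
      simp only [LinearEquiv.apply_symm_apply]
      calc mulT mul σ (E (E (comul x))) = mulT mul (E σ) (E (E (comul x))) := by rw [hEσ]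
        _ = E (mulT mul σ (E (comul x))) := L1 _ _
        _ = E (mulT mul (E σ) (E (comul x))) := by rw [hEσ]
        _ = E (E (mulT mul σ (comul x))) := by rw [L1]
    rw [inner]
    apply E.injective
    simp only [LinearEquiv.apply_symm_apply]
    calc mulT mul (E (mulT mul σ (comul x))) ϱ
        = mulT mul (E (mulT mul σ (comul x))) (E ϱ) := by rw [hEϱ]
      _ = E (mulT mul (mulT mul σ (comul x)) ϱ) := L1 _ _
      _ = E (twistComul mul comul σ ϱ x) := by rfl


end HomTwist
end

section
/- Let (H, α, R) be a quasitriangular monoidal Hom-bialgebra with Drinfeld twist σ and inverse ϱ. Define Rᵠ = (σ₂₁R)ϱ ∈ H⊗H, where σ₂₁ = σ⁽²⁾⊗σ⁽¹⁾. Then Rᵠ satisfies RᵠΔᵠ(x) = Δᵠᵒᵖ(x)Rᵠ for all x ∈ H, where Δᵠ(x) = (σΔ(x))ϱ. -/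
open TensorProduct

namespace HomTwist
open TensorProduct

section AuxLemmas

variable {k H : Type*} [CommRing k] [AddCommGroup H] [Module k H]

lemma mulT_tmul (mul : H →ₗ[k] H →ₗ[k] H) (a b c d : H) :
    mulT mul (a ⊗ₜ[k] b) (c ⊗ₜ[k] d) = mul a c ⊗ₜ[k] mul b d := by
  simp [mulT, pairMap]

lemma mulT_hom_assoc (mul : H →ₗ[k] H →ₗ[k] H) (alpha : H ≃ₗ[k] H)
    (hassoc : ∀ a b c, mul (alpha a) (mul b c) = mul (mul a b) (alpha c)) :
    ∀ a b c : H ⊗[k] H,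
      mulT mul (TensorProduct.map alpha.toLinearMap alpha.toLinearMap a) (mulT mul b c)
        = mulT mul (mulT mul a b) (TensorProduct.map alpha.toLinearMap alpha.toLinearMap c) := by
  intro a b c
  induction a using TensorProduct.induction_on with
  | zero => simp
  | add x y hx hy =>
      simp only [map_add, LinearMap.add_apply]
      rw [hx, hy]
  | tmul a₁ a₂ =>
    induction b using TensorProduct.induction_on with
    | zero => simp
    | add x y hx hy =>
      simp only [map_add, LinearMap.add_apply]
      rw [hx, hy]
    | tmul b₁ b₂ =>
      induction c using TensorProduct.induction_on with
      | zero => simp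
      | add x y hx hy =>
      simp only [map_add, LinearMap.add_apply]
      rw [hx, hy]
      | tmul c₁ c₂ => simp [mulT_tmul, hassoc]

lemma mulT_one_left (mul : H →ₗ[k] H →ₗ[k] H) (one : H) (alpha : H ≃ₗ[k] H)
    (hone : ∀ a, mul one a = alpha a) :
    ∀ a : H ⊗[k] H, mulT mul (one ⊗ₜ[k] one) a
      = TensorProduct.map alpha.toLinearMap alpha.toLinearMap a := by
  intro a
  induction a using TensorProduct.induction_on with
  | zero => simp
  | add x y hx hy =>
      simp only [map_add, LinearMap.add_apply]
      rw [hx, hy]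
  | tmul a₁ a₂ => simp [mulT_tmul, hone]

lemma mulT_one_right (mul : H →ₗ[k] H →ₗ[k] H) (one : H) (alpha : H ≃ₗ[k] H)
    (hone : ∀ a, mul a one = alpha a) :
    ∀ a : H ⊗[k] H, mulT mul a (one ⊗ₜ[k] one)
      = TensorProduct.map alpha.toLinearMap alpha.toLinearMap a := by
  intro a
  induction a using TensorProduct.induction_on with
  | zero => simp
  | add x y hx hy =>
      simp only [map_add, LinearMap.add_apply]
      rw [hx, hy]
  | tmul a₁ a₂ => simp [mulT_tmul, hone]

lemma map_mulT (mul : H →ₗ[k] H →ₗ[k] H) (alpha : H ≃ₗ[k] H)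
    (hmul : ∀ a b, alpha (mul a b) = mul (alpha a) (alpha b)) :
    ∀ a b : H ⊗[k] H,
      TensorProduct.map alpha.toLinearMap alpha.toLinearMap (mulT mul a b)
        = mulT mul (TensorProduct.map alpha.toLinearMap alpha.toLinearMap a)
            (TensorProduct.map alpha.toLinearMap alpha.toLinearMap b) := by
  intro a b
  induction a using TensorProduct.induction_on with
  | zero => simp
  | add x y hx hy =>
      simp only [map_add, LinearMap.add_apply]
      rw [hx, hy]
  | tmul a₁ a₂ =>
    induction b using TensorProduct.induction_on with
    | zero => simp
    | add x y hx hy =>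
      simp only [map_add, LinearMap.add_apply]
      rw [hx, hy]
    | tmul b₁ b₂ => simp [mulT_tmul, hmul]

lemma comm_mulT (mul : H →ₗ[k] H →ₗ[k] H) :
    ∀ a b : H ⊗[k] H,
      TensorProduct.comm k H H (mulT mul a b)
        = mulT mul (TensorProduct.comm k H H a) (TensorProduct.comm k H H b) := by
  intro a b
  induction a using TensorProduct.induction_on with
  | zero => simp
  | add x y hx hy =>
      simp only [map_add, LinearMap.add_apply]
      rw [hx, hy]
  | tmul a₁ a₂ =>
    induction b using TensorProduct.induction_on with
    | zero => simp
    | add x y hx hy =>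
      simp only [map_add, LinearMap.add_apply]
      rw [hx, hy]
    | tmul b₁ b₂ => simp [mulT_tmul]

lemma comm_map (alpha : H ≃ₗ[k] H) :
    ∀ a : H ⊗[k] H,
      TensorProduct.comm k H H (TensorProduct.map alpha.toLinearMap alpha.toLinearMap a)
        = TensorProduct.map alpha.toLinearMap alpha.toLinearMap (TensorProduct.comm k H H a) := by
  intro a
  induction a using TensorProduct.induction_on with
  | zero => simp
  | add x y hx hy =>
      simp only [map_add, LinearMap.add_apply]
      rw [hx, hy]
  | tmul a₁ a₂ => simp

lemma map_alpha_injective (alpha : H ≃ₗ[k] H) :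
    Function.Injective (TensorProduct.map alpha.toLinearMap alpha.toLinearMap :
      H ⊗[k] H →ₗ[k] H ⊗[k] H) := by
  have hleft : ∀ t : H ⊗[k] H,
      TensorProduct.map alpha.symm.toLinearMap alpha.symm.toLinearMap
        (TensorProduct.map alpha.toLinearMap alpha.toLinearMap t) = t := by
    intro t
    induction t using TensorProduct.induction_on with
    | zero => simp
    | add x y hx hy =>
      simp only [map_add, LinearMap.add_apply]
      rw [hx, hy]
    | tmul a b => simp
  intro a b h
  have := congrArg (TensorProduct.map alpha.symm.toLinearMap alpha.symm.toLinearMap) h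
  rwa [hleft, hleft] at this

/-- Abstract key computation in a Hom-algebra. -/
lemma hom_key' {A : Type*} [AddCommGroup A] [Module k A]
    (M : A →ₗ[k] A →ₗ[k] A) (β : A →ₗ[k] A) (e : A)
    (hassoc : ∀ a b c, M (β a) (M b c) = M (M a b) (β c))
    (honeL : ∀ a, M e a = β a) (honeR : ∀ a, M a e = β a)
    (hβmul : ∀ a b, β (M a b) = M (β a) (β b))
    (s s' ρ ρ' r c c' : A)
    (hs : β s = s) (hs' : β s' = s') (hρ : β ρ = ρ) (hρ' : β ρ' = ρ') (hr : β r = r)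
    (hρs : M ρ s = e) (hρ's' : M ρ' s' = e)
    (hQ : M r (β c) = M (β c') r) :
    M (M (M s' r) ρ) (M (M s (β c)) ρ) = M (M (M s' (β c')) ρ') (M (M s' r) ρ) := by
  have assoc' : ∀ a b c₀, β a = a → β c₀ = c₀ → M (M a b) c₀ = M a (M b c₀) := by
    intro a b c₀ ha hc
    have h := hassoc a b c₀
    rw [ha, hc] at h
    exact h.symm
  have hβu : β (M s' r) = M s' r := by rw [hβmul, hs', hr]
  have hβuρ : β (M (M s' r) ρ) = M (M s' r) ρ := by rw [hβmul, hβu, hρ]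
  -- LHS
  have L : M (M (M s' r) ρ) (M (M s (β c)) ρ)
      = M s' (M (β (β c')) (M r ρ)) := by
    calc M (M (M s' r) ρ) (M (M s (β c)) ρ)
        = M (M (M s' r) ρ) (M s (M (β c) ρ)) := by
          rw [assoc' s (β c) ρ hs hρ]
      _ = M (M (M s' r) ρ) (M s (β (M c ρ))) := by rw [hβmul, hρ]
      _ = M (β (M (M s' r) ρ)) (M s (β (M c ρ))) := by rw [hβuρ]
      _ = M (M (M (M s' r) ρ) s) (β (β (M c ρ))) := hassoc _ _ _
      _ = M (M (M s' r) (M ρ s)) (β (β (M c ρ))) := by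
          rw [assoc' (M s' r) ρ s hβu hs]
      _ = M (M s' r) (β (β (M c ρ))) := by rw [hρs, honeR, hβu]
      _ = M (β s') (M r (β (M c ρ))) := (hassoc _ _ _).symm
      _ = M s' (M r (M (β c) ρ)) := by rw [hs', hβmul, hρ]
      _ = M s' (M (M r (β c)) ρ) := by rw [assoc' r (β c) ρ hr hρ]
      _ = M s' (M (M (β c') r) ρ) := by rw [hQ]
      _ = M s' (M (M (β c') r) (β ρ)) := by rw [hρ]
      _ = M s' (M (β (β c')) (M r ρ)) := by rw [hassoc]
  -- RHS
  have R : M (M (M s' (β c')) ρ') (M (M s' r) ρ)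
      = M s' (M (β (β c')) (M r ρ)) := by
    have hvu : M (M c' ρ') (M s' r) = M (β c') r := by
      have h1 : M ρ' (M s' r) = r := by
        have h := hassoc ρ' s' r
        rw [hρ', hρ's', honeL, hr, hr] at h
        exact h
      have h2 := hassoc c' ρ' (M s' r)
      rw [hβu] at h2
      rw [← h2, h1]
    calc M (M (M s' (β c')) ρ') (M (M s' r) ρ)
        = M (M s' (M (β c') ρ')) (M (M s' r) ρ) := by
          rw [assoc' s' (β c') ρ' hs' hρ']
      _ = M s' (M (M (β c') ρ') (M (M s' r) ρ)) := by
          rw [assoc' s' (M (β c') ρ') (M (M s' r) ρ) hs' hβuρ]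
      _ = M s' (M (β (M c' ρ')) (M (M s' r) ρ)) := by rw [hβmul, hρ']
      _ = M s' (M (M (M c' ρ') (M s' r)) (β ρ)) := by rw [hassoc]
      _ = M s' (M (M (β c') r) ρ) := by rw [hvu, hρ]
      _ = M s' (M (M (β c') r) (β ρ)) := by rw [hρ]
      _ = M s' (M (β (β c')) (M r ρ)) := by rw [hassoc]
  rw [L, R]

end AuxLemmas

/-- (Proposition 4.9, Eq.(q2)) For a quasitriangular monoidal
Hom-bialgebra `(H, α, R)` with Drinfeld twist `σ`, the element `Rᵠ = (σ₂₁R)ϱ`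
satisfies `Rᵠ Δᵠ(x) = Δᵠᵒᵖ(x) Rᵠ`. -/
theorem twisted_R_matrix_intertwines
    {k H : Type*} [CommRing k] [AddCommGroup H] [Module k H]
    (mul : H →ₗ[k] H →ₗ[k] H) (one : H) (alpha : H ≃ₗ[k] H)
    (comul : H →ₗ[k] H ⊗[k] H) (counit : H →ₗ[k] k) (R Rinv σ ϱ : H ⊗[k] H)
    (hH : IsMonHomBialgebra mul one alpha comul counit)
    (hinv₁ : mulT mul R Rinv = one ⊗ₜ[k] one)
    (hinv₂ : mulT mul Rinv R = one ⊗ₜ[k] one)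
    (hR : IsRMatrix mul alpha comul R)
    (hσ : IsTwist mul one alpha comul counit σ ϱ) :
    ∀ x, mulT mul (mulT mul (mulT mul (TensorProduct.comm k H H σ) R) ϱ)
          (twistComul mul comul σ ϱ x)
      = mulT mul (TensorProduct.comm k H H (twistComul mul comul σ ϱ x))
          (mulT mul (mulT mul (TensorProduct.comm k H H σ) R) ϱ) := by
  intro x
  have hassoc := mulT_hom_assoc mul alpha hH.hom_assoc
  have honeL := mulT_one_left mul one alpha hH.one_mul'
  have honeR := mulT_one_right mul one alpha hH.mul_one'
  have hβmul := map_mulT mul alpha hH.alpha_mul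
  have hβe : TensorProduct.map alpha.toLinearMap alpha.toLinearMap
      ((one : H) ⊗ₜ[k] one) = one ⊗ₜ[k] one := by simp [hH.alpha_one]
  have hτe : TensorProduct.comm k H H ((one : H) ⊗ₜ[k] one) = one ⊗ₜ[k] one := by simp
  have hβσ : TensorProduct.map alpha.toLinearMap alpha.toLinearMap σ = σ := hσ.T1
  have hβR : TensorProduct.map alpha.toLinearMap alpha.toLinearMap R = R := hR.Q1
  have hβϱ : TensorProduct.map alpha.toLinearMap alpha.toLinearMap ϱ = ϱ := by
    apply map_alpha_injective alpha
    apply map_alpha_injective alpha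
    have h1 : mulT mul ϱ σ = one ⊗ₜ[k] one := hσ.inv_mul
    have h2 : mulT mul σ (TensorProduct.map alpha.toLinearMap alpha.toLinearMap ϱ)
        = one ⊗ₜ[k] one := by
      rw [← hβσ, ← hβmul, hσ.mul_inv, hβe]
    have h := hassoc ϱ σ (TensorProduct.map alpha.toLinearMap alpha.toLinearMap ϱ)
    rw [h1, h2, honeL, honeR] at h
    exact h.symm
  have hβτσ : TensorProduct.map alpha.toLinearMap alpha.toLinearMap
      (TensorProduct.comm k H H σ) = TensorProduct.comm k H H σ := by
    rw [← comm_map, hβσ]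
  have hβτϱ : TensorProduct.map alpha.toLinearMap alpha.toLinearMap
      (TensorProduct.comm k H H ϱ) = TensorProduct.comm k H H ϱ := by
    rw [← comm_map, hβϱ]
  have hβc : comul x = TensorProduct.map alpha.toLinearMap alpha.toLinearMap
      (comul (alpha.symm x)) := by
    conv_lhs => rw [← alpha.apply_symm_apply x]
    exact hH.comul_alpha (alpha.symm x)
  have hQ : mulT mul R (TensorProduct.map alpha.toLinearMap alpha.toLinearMap
        (comul (alpha.symm x)))
      = mulT mul (TensorProduct.map alpha.toLinearMap alpha.toLinearMap
        (TensorProduct.comm k H H (comul (alpha.symm x)))) R := by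
    have h := hR.Q2 x
    rw [hβc, comm_map] at h
    exact h
  have hϱσ : mulT mul ϱ σ = one ⊗ₜ[k] one := hσ.inv_mul
  have hτϱτσ : mulT mul (TensorProduct.comm k H H ϱ) (TensorProduct.comm k H H σ)
      = one ⊗ₜ[k] one := by
    rw [← comm_mulT, hσ.inv_mul, hτe]
  have htw : twistComul mul comul σ ϱ x
      = mulT mul (mulT mul σ (TensorProduct.map alpha.toLinearMap alpha.toLinearMap
          (comul (alpha.symm x)))) ϱ := by
    rw [← hβc]
    simp [twistComul]
  have hτtw : TensorProduct.comm k H H (twistComul mul comul σ ϱ x)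
      = mulT mul (mulT mul (TensorProduct.comm k H H σ)
          (TensorProduct.map alpha.toLinearMap alpha.toLinearMap
            (TensorProduct.comm k H H (comul (alpha.symm x)))))
          (TensorProduct.comm k H H ϱ) := by
    rw [htw, comm_mulT, comm_mulT, comm_map]
  rw [hτtw, htw]
  exact hom_key' (mulT mul) (TensorProduct.map alpha.toLinearMap alpha.toLinearMap)
    (one ⊗ₜ[k] one) hassoc honeL honeR hβmul
    σ (TensorProduct.comm k H H σ) ϱ (TensorProduct.comm k H H ϱ) R
    (comul (alpha.symm x)) (TensorProduct.comm k H H (comul (alpha.symm x)))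
    hβσ hβτσ hβϱ hβτϱ hβR hϱσ hτϱτσ hQ

end HomTwist
end
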